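/- If ξ = k + ia with k real and 0 < a < π/4, then 0 < Re √(−ξ tanh ξ) ≤ (a/√(cos 2a)) · √(tanh k / k). -/

import Mathlib

set_option maxHeartbeats 1000000

open Real

private lemma re_cpow_half' (z : ℂ) (hz : z ≠ 0) :
    (z ^ ((1 : ℂ)/2)).re = Real.sqrt ((‖z‖ + z.re)/2) := by
  have habs : 0 < ‖z‖ := norm_pos_iff.2 hz
  rw [Complex.cpow_def_of_ne_zero hz, Complex.exp_re]
  have hre : (Complex.log z * (1/2)).re = Real.log (‖z‖) / 2 := by
    simp [Complex.mul_re, Complex.log_re, Complex.log_im]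
    ring
  have him : (Complex.log z * (1/2)).im = z.arg / 2 := by
    simp [Complex.mul_im, Complex.log_re, Complex.log_im]
    ring
  rw [hre, him, Real.cos_half (Complex.neg_pi_lt_arg z).le (Complex.arg_le_pi z),
    Complex.cos_arg hz]
  have hexp : Real.exp (Real.log (‖z‖) / 2) = Real.sqrt (‖z‖) := by
    rw [Real.sqrt_eq_rpow, Real.rpow_def_of_pos habs]
    ring_nf
  rw [hexp, ← Real.sqrt_mul habs.le]
  congr 1
  field_simp

private lemma Ppos' (a k s t : ℝ) (hk : 0 < k)
    (hs0 : 0 < s) (hs1 : s < 1) (ht0 : 0 < t) (ht1 : t < 1)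
    (hsa : s ≤ a * (1 + s^2)) (hkt : k * (1 - t^2) ≤ t) :
    (0:ℝ) ≤ a^2*t^2*(3 + 5*s^2 + 3*s^2*t^2 + 5*s^4*t^2)
        - 2*a*k*s*t*(1 - t^2)*(1 - s^2) - k^2*s^2*(1 - s^2)*(1 - t^2)^2 := by
  have hs2 : (0:ℝ) < 1 - s^2 := by nlinarith
  have ht2 : (0:ℝ) < 1 - t^2 := by nlinarith
  have ha : 0 < a := by nlinarith
  have hvu : k * s * (1 - t^2) ≤ (a*t) * (1 + s^2) := by
    have h1 : k * s * (1 - t^2) ≤ s * t := by nlinarith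
    have h2 : s * t ≤ (a * (1 + s^2)) * t := by nlinarith
    linarith [h1, h2]
  have hv0 : (0:ℝ) ≤ k * s * (1 - t^2) := by positivity
  have e1 : (a*t) * (k * s * (1 - t^2)) ≤ (a*t) * ((a*t) * (1 + s^2)) := by nlinarith
  have e2 : (k * s * (1 - t^2))^2 ≤ ((a*t) * (1 + s^2))^2 := by nlinarith
  nlinarith [mul_nonneg (sub_nonneg.2 e1) hs2.le, mul_nonneg (sub_nonneg.2 e2) hs2.le,
    sq_nonneg (a*t*s), sq_nonneg (a*t*s^2*t), sq_nonneg (a*t*s*t), sq_nonneg (a*t*s^2),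
    mul_nonneg (sq_nonneg (a*t*s)) ht2.le]

private lemma alg_core' (a k s t X : ℝ) (ha : 0 < a) (hk : 0 < k)
    (hs0 : 0 < s) (hs1 : s < 1) (ht0 : 0 < t) (ht1 : t < 1)
    (hsa : s ≤ a * (1 + s^2)) (hkt : k * (1 - t^2) ≤ t)
    (hX0 : 0 ≤ X) (hX : X^2 = (k^2 + a^2) * (t^2 + s^2) / (1 + t^2 * s^2)) :
    X + (a*s*(1 - t^2) - k*t*(1 + s^2)) / (1 + t^2*s^2)
      ≤ 2 * a^2 * t * (1 + s^2) / (k * (1 - s^2)) := by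
  have hU : (0:ℝ) < 1 + t^2 * s^2 := by positivity
  have hs2 : (0:ℝ) < 1 - s^2 := by nlinarith
  have hp : (0:ℝ) < (t/k) * (k^2 + a^2) := by positivity
  have hq : (0:ℝ) < (k/t) * ((t^2 + s^2)/(1 + t^2*s^2)) := by positivity
  have hpq : ((t/k) * (k^2 + a^2)) * ((k/t) * ((t^2 + s^2)/(1 + t^2*s^2))) = X^2 := by
    rw [hX]
    field_simp
  have hXB : X ≤ ((t/k) * (k^2 + a^2) + (k/t) * ((t^2 + s^2)/(1 + t^2*s^2))) / 2 := by
    nlinarith [sq_nonneg ((t/k) * (k^2 + a^2) - (k/t) * ((t^2 + s^2)/(1 + t^2*s^2))), hpq, hX0,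
      sq_nonneg (X - ((t/k) * (k^2 + a^2) + (k/t) * ((t^2 + s^2)/(1 + t^2*s^2))) / 2)]
  have hrw : 2 * a^2 * t * (1 + s^2) / (k * (1 - s^2))
      - ((((t/k) * (k^2 + a^2) + (k/t) * ((t^2 + s^2)/(1 + t^2*s^2))) / 2)
         + (a*s*(1 - t^2) - k*t*(1 + s^2)) / (1 + t^2*s^2))
      = (a^2*t^2*(3 + 5*s^2 + 3*s^2*t^2 + 5*s^4*t^2)
          - 2*a*k*s*t*(1 - t^2)*(1 - s^2) - k^2*s^2*(1 - s^2)*(1 - t^2)^2)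
        / (2 * k * t * (1 + t^2*s^2) * (1 - s^2)) := by
    field_simp
    ring
  have hP := Ppos' a k s t hk hs0 hs1 ht0 ht1 hsa hkt
  have hiden : (0:ℝ) < 2 * k * t * (1 + t^2*s^2) * (1 - s^2) := by positivity
  have h2 : 0 ≤ 2 * a^2 * t * (1 + s^2) / (k * (1 - s^2))
      - ((((t/k) * (k^2 + a^2) + (k/t) * ((t^2 + s^2)/(1 + t^2*s^2))) / 2)
         + (a*s*(1 - t^2) - k*t*(1 + s^2)) / (1 + t^2*s^2)) := by
    rw [hrw]; exact div_nonneg hP hiden.le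
  linarith

private lemma abs_add_re_pos (z : ℂ) (him : z.im < 0) :
    0 < ‖z‖ + z.re := by
  have h1 : (z.re)^2 < (‖z‖)^2 := by
    rw [Complex.sq_norm, Complex.normSq_apply]
    nlinarith [mul_pos_of_neg_of_neg him him]
  nlinarith [norm_nonneg z]

private lemma main_pos (a k : ℝ) (ha0 : 0 < a) (ha : a < π / 4) (hk : 0 < k) :
    ((-((k : ℂ) + a * Complex.I) * Complex.tanh ((k : ℂ) + a * Complex.I))).im < 0 ∧
    0 < ((-((k : ℂ) + a * Complex.I) * Complex.tanh ((k : ℂ) + a * Complex.I)) ^ ((1 : ℂ) / 2)).re ∧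
    ((-((k : ℂ) + a * Complex.I) * Complex.tanh ((k : ℂ) + a * Complex.I)) ^ ((1 : ℂ) / 2)).re ≤
      (a / Real.sqrt (Real.cos (2 * a))) * Real.sqrt (Real.tanh k / k) := by
  have hpi := Real.pi_pos
  set sh := Real.sinh k with hsh_def
  set ch := Real.cosh k with hch_def
  set sa := Real.sin a with hsa_def
  set ca := Real.cos a with hca_def
  set t := Real.tanh k with ht_def
  set s := Real.tan a with hs_def
  have hch : 0 < ch := Real.cosh_pos k
  have hca : 0 < ca := Real.cos_pos_of_mem_Ioo ⟨by linarith, by linarith⟩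
  have hsh : 0 < sh := by rw [hsh_def]; exact Real.sinh_pos_iff.2 hk
  have hsa : 0 < sa := Real.sin_pos_of_pos_of_lt_pi ha0 (by linarith)
  have hch2 : ch^2 = 1 + sh^2 := by rw [hch_def, hsh_def, Real.cosh_sq]; ring
  have hca2 : sa^2 + ca^2 = 1 := Real.sin_sq_add_cos_sq a
  have hts : sh = t * ch := by
    rw [ht_def, Real.tanh_eq_sinh_div_cosh, div_mul_cancel₀ _ (ne_of_gt hch)]
  have hscs : sa = s * ca := by
    rw [hs_def, Real.tan_eq_sin_div_cos, div_mul_cancel₀ _ (ne_of_gt hca)]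
  have hcoshx : Complex.cosh ((k:ℂ) + a*Complex.I) = ((ch*ca : ℝ):ℂ) + ((sh*sa : ℝ):ℂ)*Complex.I := by
    simp only [Complex.ofReal_mul, hsh_def, hch_def, hsa_def, hca_def]
    rw [Complex.cosh_add, Complex.cosh_mul_I, Complex.sinh_mul_I,
      ← Complex.ofReal_cosh, ← Complex.ofReal_sinh, ← Complex.ofReal_cos, ← Complex.ofReal_sin]
    ring
  have hsinhx : Complex.sinh ((k:ℂ) + a*Complex.I) = ((sh*ca : ℝ):ℂ) + ((ch*sa : ℝ):ℂ)*Complex.I := by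
    simp only [Complex.ofReal_mul, hsh_def, hch_def, hsa_def, hca_def]
    rw [Complex.sinh_add, Complex.cosh_mul_I, Complex.sinh_mul_I,
      ← Complex.ofReal_cosh, ← Complex.ofReal_sinh, ← Complex.ofReal_cos, ← Complex.ofReal_sin]
    ring
  set ξ : ℂ := (k:ℂ) + a*Complex.I with hxi
  set N : ℝ := (ch*ca)^2 + (sh*sa)^2 with hN_def
  have hN : 0 < N := by positivity
  have hwd : -ξ * Complex.tanh ξ = (-ξ * Complex.sinh ξ) / Complex.cosh ξ := by
    rw [Complex.tanh_eq_sinh_div_cosh, mul_div_assoc]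
  have hz : -ξ * Complex.sinh ξ
      = ((a*(ch*sa) - k*(sh*ca) : ℝ):ℂ) + ((-(k*(ch*sa)) - a*(sh*ca) : ℝ):ℂ)*Complex.I := by
    rw [hsinhx, hxi]
    push_cast
    apply Complex.ext <;> simp <;> ring
  have hwre : (-ξ * Complex.tanh ξ).re = (a*sa*ca - k*sh*ch) / N := by
    rw [hwd, Complex.div_re, hz, hcoshx, Complex.normSq_add_mul_I, ← hN_def]
    simp only [Complex.add_re, Complex.add_im, Complex.ofReal_re, Complex.ofReal_im,
      Complex.mul_re, Complex.mul_im, Complex.I_re, Complex.I_im]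
    rw [← add_div]
    congr 1
    linear_combination (a*sa*ca)*hch2 - (k*sh*ch)*hca2
  have hwim : (-ξ * Complex.tanh ξ).im = -(a*sh*ch + k*sa*ca) / N := by
    rw [hwd, Complex.div_im, hz, hcoshx, Complex.normSq_add_mul_I, ← hN_def]
    simp only [Complex.add_re, Complex.add_im, Complex.ofReal_re, Complex.ofReal_im,
      Complex.mul_re, Complex.mul_im, Complex.I_re, Complex.I_im]
    rw [div_sub_div_same]
    congr 1
    linear_combination (-(k*sa*ca))*hch2 - (a*sh*ch)*hca2
  have habs2 : (‖-ξ * Complex.tanh ξ‖)^2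
      = (k^2+a^2) * ((sh*ca)^2 + (ch*sa)^2) / N := by
    rw [Complex.sq_norm, hwd, Complex.normSq_div, Complex.normSq_mul, hsinhx,
      Complex.normSq_add_mul_I, hcoshx, Complex.normSq_add_mul_I, ← hN_def]
    have : Complex.normSq (-ξ) = k^2 + a^2 := by
      rw [Complex.normSq_neg, hxi, Complex.normSq_add_mul_I]
    rw [this]
  -- w.im < 0
  have himneg : (-ξ * Complex.tanh ξ).im < 0 := by
    rw [hwim]
    apply div_neg_of_neg_of_pos _ hN
    have c1 := mul_pos (mul_pos ha0 hsh) hch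
    have c2 := mul_pos (mul_pos hk hsa) hca
    linarith
  have hw0 : -ξ * Complex.tanh ξ ≠ 0 := by
    intro h
    rw [h] at himneg
    simp at himneg
  -- basic bounds
  have hU : (0:ℝ) < 1 + t^2*s^2 := by positivity
  have hs0 : 0 < s := by
    rw [hs_def]; exact Real.tan_pos_of_pos_of_lt_pi_div_two ha0 (by linarith)
  have hs1 : s < 1 := by
    rw [hs_def, ← Real.tan_pi_div_four]
    exact Real.tan_lt_tan_of_nonneg_of_lt_pi_div_two ha0.le (by linarith) ha
  have ht0 : 0 < t := by
    rw [ht_def, Real.tanh_eq_sinh_div_cosh]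
    exact div_pos (Real.sinh_pos_iff.2 hk) (Real.cosh_pos k)
  have ht1 : t < 1 := by
    rw [ht_def, Real.tanh_eq_sinh_div_cosh, div_lt_one (Real.cosh_pos k)]
    linarith [Real.cosh_sub_sinh k, Real.exp_pos (-k)]
  have hch2' : ch^2*(1 - t^2) = 1 := by
    linear_combination hch2 + (sh + t*ch)*hts
  have hca2' : ca^2*(1 + s^2) = 1 := by
    linear_combination hca2 - (sa + s*ca)*hscs
  have hsa_le : s ≤ a * (1 + s^2) := by
    have h1 : sa * ca ≤ a := by
      have c1 : sa * ca ≤ sa * 1 := mul_le_mul_of_nonneg_left (Real.cos_le_one a) hsa.le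
      linarith [Real.sin_lt ha0]
    have h2 : s * ca^2 ≤ a := by
      calc s * ca^2 = (s*ca)*ca := by ring
      _ = sa * ca := by rw [← hscs]
      _ ≤ a := h1
    calc s = s * (ca^2*(1 + s^2)) := by rw [hca2']; ring
    _ = (s * ca^2) * (1 + s^2) := by ring
    _ ≤ a * (1 + s^2) := mul_le_mul_of_nonneg_right h2 (by positivity)
  have hkt : k * (1 - t^2) ≤ t := by
    have h3 : k ≤ sh * ch := by
      have c1 := (Real.self_lt_sinh_iff (x := k)).2 hk
      have c2 : sh * 1 ≤ sh * ch := mul_le_mul_of_nonneg_left (Real.one_le_cosh k) hsh.le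
      linarith
    have h4 : (k * (1 - t^2)) * ch^2 ≤ t * ch^2 := by
      calc (k * (1 - t^2)) * ch^2 = k * (ch^2 * (1 - t^2)) := by ring
      _ = k := by rw [hch2']; ring
      _ ≤ sh * ch := h3
      _ = t * ch^2 := by rw [hts]; ring
    exact le_of_mul_le_mul_right h4 (by positivity)
  have hXconv : (‖-ξ * Complex.tanh ξ‖)^2 = (k^2+a^2)*(t^2+s^2)/(1+t^2*s^2) := by
    rw [habs2, div_eq_div_iff (ne_of_gt hN) (ne_of_gt hU), hN_def, hts, hscs]
    ring
  have hreconv : (-ξ * Complex.tanh ξ).re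
      = (a*s*(1 - t^2) - k*t*(1 + s^2)) / (1 + t^2*s^2) := by
    rw [hwre, div_eq_div_iff (ne_of_gt hN) (ne_of_gt hU), hN_def, hts, hscs]
    linear_combination (-((1 + t^2*s^2)*a*s*ca^2))*hch2' + ((1 + t^2*s^2)*k*t*ch^2)*hca2'
  -- cos 2a
  have hC : 0 < Real.cos (2*a) := Real.cos_pos_of_mem_Ioo ⟨by linarith, by linarith⟩
  have hCs : Real.cos (2*a) = (1 - s^2)/(1 + s^2) := by
    rw [Real.cos_two_mul', ← hca_def, ← hsa_def, eq_div_iff (by positivity), hscs]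
    linear_combination (1 - s^2)*hca2'
  -- main bound
  have halg := alg_core' a k s t (‖-ξ * Complex.tanh ξ‖) ha0 hk hs0 hs1 ht0 ht1
    hsa_le hkt (norm_nonneg _) hXconv
  have hkey : (‖-ξ * Complex.tanh ξ‖ + (-ξ * Complex.tanh ξ).re)/2
      ≤ a^2 / Real.cos (2*a) * (t / k) := by
    have hZ : a^2 / Real.cos (2*a) * (t / k) = (2 * a^2 * t * (1 + s^2) / (k * (1 - s^2)))/2 := by
      rw [hCs]
      have hs2 : (0:ℝ) < 1 - s^2 := by
        have := mul_pos (show (0:ℝ) < 1 - s by linarith) (show (0:ℝ) < 1 + s by linarith)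
        linarith
      field_simp
    rw [hZ, hreconv]
    linarith [halg]
  -- assemble
  have hrho := re_cpow_half' _ hw0
  have habsre : 0 < ‖-ξ * Complex.tanh ξ‖ + (-ξ * Complex.tanh ξ).re :=
    abs_add_re_pos _ himneg
  refine ⟨himneg, ?_, ?_⟩
  · rw [hrho]
    exact Real.sqrt_pos.2 (by linarith)
  · rw [hrho]
    have hM0 : 0 ≤ (a / Real.sqrt (Real.cos (2*a))) * Real.sqrt (t / k) := by positivity
    have hM2 : ((a / Real.sqrt (Real.cos (2*a))) * Real.sqrt (t / k))^2
        = a^2 / Real.cos (2*a) * (t / k) := by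
      rw [mul_pow, div_pow, Real.sq_sqrt hC.le, Real.sq_sqrt (by positivity : (0:ℝ) ≤ t/k)]
    calc Real.sqrt ((‖-ξ * Complex.tanh ξ‖ + (-ξ * Complex.tanh ξ).re)/2)
        ≤ Real.sqrt (((a / Real.sqrt (Real.cos (2*a))) * Real.sqrt (t / k))^2) := by
          apply Real.sqrt_le_sqrt
          rw [hM2]
          exact hkey
    _ = (a / Real.sqrt (Real.cos (2*a))) * Real.sqrt (t / k) := Real.sqrt_sq hM0

/-- If `ξ = k + ia` with `k` real and `0 < a < π/4`, then
`0 < Re √(−ξ tanh ξ) ≤ (a/√(cos 2a)) √(tanh k / k)`,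
where `tanh k / k` is interpreted as `1` at `k = 0`. -/
theorem re_sqrt_neg_xi_tanh_bound (a k : ℝ) (ha0 : 0 < a) (ha : a < π / 4) :
    0 < ((-((k : ℂ) + a * Complex.I) * Complex.tanh ((k : ℂ) + a * Complex.I)) ^ ((1 : ℂ) / 2)).re ∧
    ((-((k : ℂ) + a * Complex.I) * Complex.tanh ((k : ℂ) + a * Complex.I)) ^ ((1 : ℂ) / 2)).re ≤
      (a / Real.sqrt (Real.cos (2 * a))) *
        Real.sqrt (if k = 0 then 1 else Real.tanh k / k) := by
  have hpi := Real.pi_pos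
  rcases lt_trichotomy k 0 with hk | hk | hk
  · -- negative k : conjugate of the positive case
    obtain ⟨him, hpos, hle⟩ := main_pos a (-k) ha0 ha (by linarith)
    rw [if_neg (ne_of_lt hk)]
    have harg : (-(((-k : ℝ) : ℂ) + a * Complex.I) * Complex.tanh (((-k : ℝ) : ℂ) + a * Complex.I)).arg ≠ π := by
      intro h
      rw [Complex.arg_eq_pi_iff] at h
      push_cast at h him
      linarith [h.2, him]
    have hconj : -((k : ℂ) + a * Complex.I) * Complex.tanh ((k : ℂ) + a * Complex.I)
        = (starRingEnd ℂ) (-(((-k : ℝ) : ℂ) + a * Complex.I) * Complex.tanh (((-k : ℝ) : ℂ) + a * Complex.I)) := by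
      have h1 : (starRingEnd ℂ) ((((-k : ℝ) : ℂ)) + a * Complex.I) = -((k : ℂ) + a * Complex.I) := by
        apply Complex.ext <;> simp
      rw [map_mul, map_neg, ← Complex.tanh_conj, h1, Complex.tanh_neg]
      ring
    have hre : ((-((k : ℂ) + a * Complex.I) * Complex.tanh ((k : ℂ) + a * Complex.I)) ^ ((1 : ℂ) / 2)).re
        = ((-(((-k : ℝ) : ℂ) + a * Complex.I) * Complex.tanh (((-k : ℝ) : ℂ) + a * Complex.I)) ^ ((1 : ℂ) / 2)).re := by
      rw [hconj, Complex.conj_cpow _ _ harg]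
      rw [show (starRingEnd ℂ) ((1 : ℂ)/2) = (1 : ℂ)/2 by norm_num [Complex.ext_iff]]
      rw [Complex.conj_re]
    rw [hre]
    refine ⟨hpos, ?_⟩
    have : Real.tanh (-k) / (-k) = Real.tanh k / k := by
      rw [Real.tanh_neg, neg_div_neg_eq]
    rw [this] at hle
    exact hle
  · -- k = 0
    subst hk
    rw [if_pos rfl, Real.sqrt_one]
    have hca : 0 < Real.cos a := Real.cos_pos_of_mem_Ioo ⟨by linarith, by linarith⟩
    have hta : 0 < Real.tan a := Real.tan_pos_of_pos_of_lt_pi_div_two ha0 (by linarith)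
    have hC : 0 < Real.cos (2*a) := Real.cos_pos_of_mem_Ioo ⟨by linarith, by linarith⟩
    have hw : -(((0:ℝ) : ℂ) + a * Complex.I) * Complex.tanh (((0:ℝ) : ℂ) + a * Complex.I)
        = (((a * Real.tan a : ℝ)) : ℂ) := by
      have h0 : ((0:ℝ) : ℂ) + a * Complex.I = (a : ℂ) * Complex.I := by push_cast; ring
      rw [h0, Complex.tanh_mul_I, ← Complex.ofReal_tan, Complex.ofReal_mul]
      linear_combination (-((a:ℂ) * ((Real.tan a : ℝ):ℂ))) * Complex.I_sq
    have hcp : ((((a * Real.tan a : ℝ)) : ℂ)) ^ ((1:ℂ)/2) = (((a * Real.tan a) ^ ((1:ℝ)/2) : ℝ) : ℂ) := by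
      rw [Complex.ofReal_cpow (by positivity : (0:ℝ) ≤ a * Real.tan a)]
      norm_num
    have hre : ((-(((0:ℝ):ℂ) + a * Complex.I) * Complex.tanh (((0:ℝ):ℂ) + a * Complex.I)) ^ ((1 : ℂ) / 2)).re
        = Real.sqrt (a * Real.tan a) := by
      rw [hw, hcp, Complex.ofReal_re, ← Real.sqrt_eq_rpow]
    constructor
    · rw [show ((0:ℝ):ℂ) = (0:ℂ) from rfl] at hre ⊢
      rw [hre]
      exact Real.sqrt_pos.2 (by positivity)
    · rw [show ((0:ℝ):ℂ) = (0:ℂ) from rfl] at hre ⊢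
      rw [hre, mul_one]
      have hsa0 : 0 ≤ Real.sin a := Real.sin_nonneg_of_nonneg_of_le_pi ha0.le (by linarith)
      have hsalta : Real.sin a < a := Real.sin_lt ha0
      have hcc : Real.cos (2*a) ≤ Real.cos a := by
        apply Real.cos_le_cos_of_nonneg_of_le_pi ha0.le (by linarith) (by linarith)
      have h2 : Real.sin a * Real.cos (2*a) ≤ a * Real.cos a := by
        have c1 : Real.sin a * Real.cos (2*a) ≤ Real.sin a * Real.cos a :=
          mul_le_mul_of_nonneg_left hcc hsa0
        have c2 : Real.sin a * Real.cos a ≤ a * Real.cos a :=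
          mul_le_mul_of_nonneg_right hsalta.le hca.le
        linarith
      have h3 : Real.tan a * Real.cos (2*a) ≤ a := by
        rw [Real.tan_eq_sin_div_cos, div_mul_eq_mul_div, div_le_iff₀ hca]
        linarith
      have h4 : a * Real.tan a ≤ (a / Real.sqrt (Real.cos (2*a)))^2 := by
        rw [div_pow, Real.sq_sqrt hC.le, le_div_iff₀ hC]
        calc a * Real.tan a * Real.cos (2*a) = a * (Real.tan a * Real.cos (2*a)) := by ring
        _ ≤ a * a := mul_le_mul_of_nonneg_left h3 ha0.le
        _ = a^2 := by ring
      have hM0 : 0 ≤ a / Real.sqrt (Real.cos (2*a)) := by positivity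
      calc Real.sqrt (a * Real.tan a) ≤ Real.sqrt ((a / Real.sqrt (Real.cos (2*a)))^2) :=
        Real.sqrt_le_sqrt h4
      _ = a / Real.sqrt (Real.cos (2*a)) := Real.sqrt_sq hM0
  · obtain ⟨_, hpos, hle⟩ := main_pos a k ha0 ha hk
    rw [if_neg (ne_of_gt hk)]
    exact ⟨hpos, hle⟩
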